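/- Let M be a loopless matroid of rank d whose independence complex satisfies h_d = k via a PS-ear decomposition with k−1 ears. Then the number of elements of the simplification (number of vertices of I(M)) satisfies f₀(I(M)) ≤ 2d + k − 1. -/

import Mathlib

open Polynomial Finset

/-- The h-polynomial `h(Δ,t) = ∑_{i=0}^d f_{i-1} t^i (1-t)^{d-i}` of a complex of
dimension `d-1`, written as a sum over faces. -/
noncomputable def hPoly {α : Type*} [DecidableEq α] (d : ℕ) (Δ : Finset (Finset α)) :
    Polynomial ℤ :=
  ∑ F ∈ Δ, X ^ F.card * (1 - X) ^ (d - F.card)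

/-- The join of two complexes. -/
def joinC {α : Type*} [DecidableEq α] (Δ₁ Δ₂ : Finset (Finset α)) : Finset (Finset α) :=
  (Δ₁ ×ˢ Δ₂).image fun p => p.1 ∪ p.2

/-- A PS-sphere: a join of boundaries of simplices. -/
def IsPSSphere {α : Type*} [DecidableEq α] (S : Finset (Finset α)) : Prop :=
  ∃ P : Finset (Finset α), (∀ B ∈ P, 2 ≤ B.card) ∧
    (P : Set (Finset α)).Pairwise Disjoint ∧
    S = (P.sup id).powerset.filter fun F => ∀ B ∈ P, ¬B ⊆ F

/-- `K` is a PS-ball with boundary `B`. -/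
def IsPSBall {α : Type*} [DecidableEq α] (K B : Finset (Finset α)) : Prop :=
  ∃ (S : Finset (Finset α)) (G : Finset α), IsPSSphere S ∧ G.Nonempty ∧
    Disjoint (S.sup id) G ∧ K = joinC S G.powerset ∧ B = joinC S (G.powerset.erase G)

/-- `Δ'` is obtained from `Δ` by attaching a PS-ear. -/
def EarAttach {α : Type*} [DecidableEq α] (Δ Δ' : Finset (Finset α)) : Prop :=
  ∃ K B : Finset (Finset α), IsPSBall K B ∧ K.sup Finset.card = Δ.sup Finset.card ∧
    Δ ∩ K = B ∧ Δ' = Δ ∪ K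


def PSEarDecomposable {α : Type*} [DecidableEq α] (Δ : Finset (Finset α)) : Prop :=
  ∃ (n : ℕ) (c : ℕ → Finset (Finset α)), IsPSSphere (c 0) ∧
    (∀ j < n, EarAttach (c j) (c (j + 1))) ∧ c n = Δ

/-- The independence complex of a matroid, as a finset of finsets. -/
noncomputable def indepComplex {α : Type*} [DecidableEq α] [Fintype α] (M : Matroid α) :
    Finset (Finset α) := by
  classical exact Finset.univ.filter fun F : Finset α => M.Indep ↑F

lemma coeff_zero_one_sub_X_pow (m : ℕ) : ((1 - X : Polynomial ℤ) ^ m).coeff 0 = 1 := by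
  simp [Polynomial.coeff_zero_eq_eval_zero]

lemma coeff_one_one_sub_X_pow (m : ℕ) : ((1 - X : Polynomial ℤ) ^ m).coeff 1 = -m := by
  induction m with
  | zero => simp [Polynomial.coeff_one]
  | succ n ih =>
    rw [pow_succ, mul_sub, mul_one]
    rw [Polynomial.coeff_sub, Polynomial.coeff_mul_X, ih, coeff_zero_one_sub_X_pow]
    push_cast; ring

lemma coeff_one_term (c d : ℕ) :
    ((X : Polynomial ℤ) ^ c * (1 - X) ^ (d - c)).coeff 1 =
      if c = 0 then -(d : ℤ) else if c = 1 then 1 else 0 := by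
  rw [mul_comm, Polynomial.coeff_mul_X_pow']
  match c with
  | 0 => simp [coeff_one_one_sub_X_pow]
  | 1 => simp [coeff_zero_one_sub_X_pow]
  | (n+2) => simp

lemma coeff1_sum {α : Type*} [DecidableEq α] (d : ℕ) (s : Finset (Finset α)) :
    (∑ F ∈ s, (X : Polynomial ℤ) ^ F.card * (1 - X) ^ (d - F.card)).coeff 1
      = ((s.filter fun F => F.card = 1).card : ℤ) - if ∅ ∈ s then (d : ℤ) else 0 := by
  rw [Polynomial.finset_sum_coeff]
  have h1 : ∀ F ∈ s, ((X : Polynomial ℤ) ^ F.card * (1 - X) ^ (d - F.card)).coeff 1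
      = (if F = ∅ then -(d : ℤ) else 0) + (if F.card = 1 then 1 else 0) := by
    intro F _
    rw [coeff_one_term]
    rcases Nat.eq_zero_or_pos F.card with h | h
    · simp [Finset.card_eq_zero.mp h, h]
    · have hne : F ≠ ∅ := by
        intro h0; simp [h0] at h
      have : F.card ≠ 0 := h.ne'
      simp [this, hne]
  rw [Finset.sum_congr rfl h1, Finset.sum_add_distrib]
  have h2 : (∑ F ∈ s, if F = ∅ then -(d : ℤ) else 0) = if ∅ ∈ s then -(d : ℤ) else 0 := by
    rw [Finset.sum_ite_eq' s ∅ (fun _ => -(d : ℤ))]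
  have h3 : (∑ F ∈ s, if F.card = 1 then (1 : ℤ) else 0)
      = ((s.filter fun F => F.card = 1).card : ℤ) := by
    rw [Finset.card_filter]; push_cast
    exact Finset.sum_congr rfl fun x _ => by split <;> simp
  rw [h2, h3]; split <;> ring

lemma sphere_coeff1 {α : Type*} [DecidableEq α] {S : Finset (Finset α)} (d : ℕ)
    (hS : IsPSSphere S) (hd : S.sup Finset.card ≤ d) :
    (∑ F ∈ S, (X : Polynomial ℤ) ^ F.card * (1 - X) ^ (d - F.card)).coeff 1 ≤ (d : ℤ) := by
  obtain ⟨P, h2, hdisj, hSeq⟩ := hS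
  set V : Finset α := P.sup id with hV
  have hemp : ∅ ∈ S := by
    rw [hSeq]
    refine Finset.mem_filter.mpr ⟨Finset.mem_powerset.mpr (Finset.empty_subset _), ?_⟩
    intro B hB hsub
    have h2B := h2 B hB
    rw [Finset.subset_empty.mp hsub] at h2B
    simp at h2B
  rw [coeff1_sum, if_pos hemp]
  -- choice of a point in each block
  have hne : ∀ B ∈ P, B.Nonempty := fun B hB => Finset.card_pos.mp (by have := h2 B hB; omega)
  set R : Finset α := P.attach.image (fun B => (hne B.1 B.2).choose) with hR
  have hchoose : ∀ B (h : B ∈ P), (hne B h).choose ∈ B := fun B h => (hne B h).choose_spec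
  have hRV : R ⊆ V := by
    intro a ha
    obtain ⟨B, _, rfl⟩ := Finset.mem_image.mp ha
    exact Finset.mem_sup.mpr ⟨B.1, B.2, hchoose B.1 B.2⟩
  have hRcard : R.card = P.card := by
    rw [hR, Finset.card_image_of_injOn, Finset.card_attach]
    intro b1 _ b2 _ heq
    by_contra hne12
    have hd12 : Disjoint b1.1 b2.1 := hdisj b1.2 b2.2 (fun h => hne12 (Subtype.ext h))
    simp only at heq
    exact (Finset.disjoint_left.mp hd12 (hchoose b1.1 b1.2)) (heq ▸ hchoose b2.1 b2.2)
  set T : Finset α := V \ R with hT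
  have hTmem : T ∈ S := by
    rw [hSeq]
    refine Finset.mem_filter.mpr ⟨Finset.mem_powerset.mpr (Finset.sdiff_subset), ?_⟩
    intro B hB hsub
    have h1 : (hne B hB).choose ∈ T := hsub (hchoose B hB)
    have h2' : (hne B hB).choose ∈ R :=
      Finset.mem_image.mpr ⟨⟨B, hB⟩, Finset.mem_attach _ _, rfl⟩
    exact (Finset.mem_sdiff.mp h1).2 h2'
  have hTd : T.card ≤ d := le_trans (Finset.le_sup hTmem) hd
  have hTcard : T.card = V.card - R.card := Finset.card_sdiff_of_subset hRV
  have hVsum : V.card = ∑ B ∈ P, B.card := by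
    rw [hV, Finset.sup_eq_biUnion, Finset.card_biUnion]
    · simp
    · intro x hx y hy hxy; exact hdisj hx hy hxy
  have hV2P : 2 * P.card ≤ V.card := by
    rw [hVsum]
    calc 2 * P.card = ∑ _B ∈ P, 2 := by rw [Finset.sum_const]; ring
    _ ≤ ∑ B ∈ P, B.card := Finset.sum_le_sum h2
  have hRVcard : R.card ≤ V.card := Finset.card_le_card hRV
  have hf0 : (S.filter fun F => F.card = 1).card ≤ V.card := by
    have hsub : (S.filter fun F => F.card = 1) ⊆ V.powersetCard 1 := by
      intro F hF
      obtain ⟨hFS, hF1⟩ := Finset.mem_filter.mp hF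
      rw [hSeq] at hFS
      exact Finset.mem_powersetCard.mpr
        ⟨Finset.mem_powerset.mp (Finset.mem_filter.mp hFS).1, hF1⟩
    calc (S.filter fun F => F.card = 1).card ≤ (V.powersetCard 1).card :=
          Finset.card_le_card hsub
    _ = V.card := by rw [Finset.card_powersetCard, Nat.choose_one_right]
  have : (S.filter fun F => F.card = 1).card ≤ 2 * d := by omega
  have := Int.ofNat_le.mpr this
  push_cast at this ⊢
  linarith

lemma ear_coeff1 {α : Type*} [DecidableEq α] (d : ℕ) {Δ Δ' : Finset (Finset α)}
    (h : EarAttach Δ Δ') : (hPoly d Δ').coeff 1 ≤ (hPoly d Δ).coeff 1 + 1 := by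
  obtain ⟨K, B, ⟨S, G, hSsph, hGne, hdisj, hK, hB⟩, hsupK, hint, hΔ'⟩ := h
  have hBK : B ⊆ K := by
    rw [hK, hB]
    intro F hF
    obtain ⟨p, hp, rfl⟩ := Finset.mem_image.mp hF
    obtain ⟨hp1, hp2⟩ := Finset.mem_product.mp hp
    exact Finset.mem_image.mpr ⟨p, Finset.mem_product.mpr ⟨hp1, Finset.mem_of_mem_erase hp2⟩, rfl⟩
  have hGsub : ∀ F ∈ K \ B, G ⊆ F := by
    intro F hF
    obtain ⟨hFK, hFB⟩ := Finset.mem_sdiff.mp hF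
    rw [hK] at hFK
    obtain ⟨p, hp, rfl⟩ := Finset.mem_image.mp hFK
    obtain ⟨hp1, hp2⟩ := Finset.mem_product.mp hp
    by_cases hpG : p.2 = G
    · rw [← hpG]; exact Finset.subset_union_right
    · exfalso
      apply hFB
      rw [hB]
      exact Finset.mem_image.mpr ⟨p, Finset.mem_product.mpr
        ⟨hp1, Finset.mem_erase.mpr ⟨hpG, hp2⟩⟩, rfl⟩
  -- decompose the sums
  have hsum : hPoly d Δ' = hPoly d Δ +
      ∑ F ∈ K \ B, (X : Polynomial ℤ) ^ F.card * (1 - X) ^ (d - F.card) := by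
    rw [hΔ']
    unfold hPoly
    have h1 := Finset.sum_union_inter (s₁ := Δ) (s₂ := K)
      (f := fun F : Finset α => (X : Polynomial ℤ) ^ F.card * (1 - X) ^ (d - F.card))
    have h2 := Finset.sum_sdiff (f := fun F : Finset α =>
      (X : Polynomial ℤ) ^ F.card * (1 - X) ^ (d - F.card)) hBK
    rw [hint] at h1
    linear_combination h1 - h2
  rw [hsum, Polynomial.coeff_add, coeff1_sum]
  have hemp : ∅ ∉ K \ B := by
    intro h0
    exact hGne.ne_empty (Finset.subset_empty.mp (hGsub ∅ h0))
  rw [if_neg hemp]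
  have hcard : ((K \ B).filter fun F => F.card = 1).card ≤ 1 := by
    rw [Finset.card_le_one]
    intro a ha b hb
    obtain ⟨haKB, ha1⟩ := Finset.mem_filter.mp ha
    obtain ⟨hbKB, hb1⟩ := Finset.mem_filter.mp hb
    have hGa : G = a := Finset.eq_of_subset_of_card_le (hGsub a haKB)
      (by have := Finset.card_le_card (hGsub a haKB); have := hGne.card_pos; omega)
    have hGb : G = b := Finset.eq_of_subset_of_card_le (hGsub b hbKB)
      (by have := Finset.card_le_card (hGsub b hbKB); have := hGne.card_pos; omega)
    rw [← hGa, ← hGb]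
  have : (((K \ B).filter fun F => F.card = 1).card : ℤ) ≤ 1 := by exact_mod_cast hcard
  linarith

/-- If the independence complex of a loopless rank-`d` matroid has a PS-ear
decomposition with `k-1` ears and `h_d = k`, then the number of vertices satisfies
`f₀ ≤ 2d + k - 1`. -/
theorem f0_indepComplex_le {α : Type*} [DecidableEq α] [Fintype α] (M : Matroid α)
    (d k : ℕ) (hk : 1 ≤ k) (hloopless : ∀ a ∈ M.E, M.Indep {a})
    (hrank : ∃ B : Finset α, M.IsBase ↑B ∧ B.card = d)
    (hdec : ∃ c : ℕ → Finset (Finset α), IsPSSphere (c 0) ∧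
      (∀ j < k - 1, EarAttach (c j) (c (j + 1))) ∧ c (k - 1) = indepComplex M)
    (hkd : (hPoly d (indepComplex M)).coeff d = k) :
    ((indepComplex M).filter fun F => F.card = 1).card ≤ 2 * d + k - 1 := by
  classical
  obtain ⟨B0, hB0base, hB0card⟩ := hrank
  obtain ⟨c, hsph, hstep, hend⟩ := hdec
  set Δ := indepComplex M with hΔdef
  have hmemΔ : ∀ F : Finset α, F ∈ Δ ↔ M.Indep ↑F := by
    intro F
    simp [hΔdef, indepComplex]
  -- the sup of the independence complex is d
  have hsupd : Δ.sup Finset.card = d := by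
    apply le_antisymm
    · apply Finset.sup_le
      intro F hF
      have hFind : M.Indep ↑F := (hmemΔ F).mp hF
      obtain ⟨B', hB', hFB'⟩ := hFind.exists_isBase_superset
      have h1 : (↑F : Set α).encard ≤ B'.encard := Set.encard_mono hFB'
      have h2 : B'.encard = (↑B0 : Set α).encard := hB'.encard_eq_encard_of_isBase hB0base
      rw [h2, Set.encard_coe_eq_coe_finsetCard, Set.encard_coe_eq_coe_finsetCard,
        hB0card] at h1
      exact_mod_cast h1
    · have : B0 ∈ Δ := (hmemΔ B0).mpr hB0base.indep
      calc d = B0.card := hB0card.symm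
      _ ≤ Δ.sup Finset.card := Finset.le_sup this
  -- the sup is constant along the chain
  set e := k - 1 with he
  have hsupchain : ∀ j, j ≤ e → (c j).sup Finset.card = (c 0).sup Finset.card := by
    intro j hj
    induction j with
    | zero => rfl
    | succ n ih =>
      obtain ⟨K, B, _, hsupK, hint, hΔ'⟩ := hstep n (by omega)
      rw [hΔ', Finset.sup_union, hsupK, sup_idem]
      exact ih (by omega)
  have hc0sup : (c 0).sup Finset.card = d := by
    have := hsupchain e le_rfl
    rw [hend] at this
    rw [← this, hsupd]
  -- coefficient bound along the chain
  have hbound : ∀ j, j ≤ e → (hPoly d (c j)).coeff 1 ≤ (d : ℤ) + j := by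
    intro j hj
    induction j with
    | zero =>
      have h0 := sphere_coeff1 d hsph (le_of_eq hc0sup)
      unfold hPoly
      simpa using h0
    | succ n ih =>
      have h1 := ear_coeff1 d (hstep n (by omega))
      have h2 := ih (by omega)
      push_cast
      push_cast at h2
      linarith
  have hfin : (hPoly d Δ).coeff 1 ≤ (d : ℤ) + e := by
    have := hbound e le_rfl
    rwa [hend] at this
  -- compute the coefficient
  have hempΔ : ∅ ∈ Δ := (hmemΔ ∅).mpr (by simpa using M.empty_indep)
  have hco : (hPoly d Δ).coeff 1
      = ((Δ.filter fun F => F.card = 1).card : ℤ) - d := by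
    unfold hPoly
    rw [coeff1_sum, if_pos hempΔ]
  rw [hco] at hfin
  have : (Δ.filter fun F => F.card = 1).card ≤ 2 * d + e := by
    have h3 : ((Δ.filter fun F => F.card = 1).card : ℤ) ≤ 2 * d + e := by linarith
    exact_mod_cast h3
  omega
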